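/- The undirected nearest-neighbor graph is a forest: it contains no cycles (of length ≥ 3), so each connected component is a tree. -/

import Mathlib

/-- The undirected nearest-neighbor graph. -/
def nnGraph {D : Type} (n : D → D) : SimpleGraph D :=
  SimpleGraph.fromRel (fun i j => n i = j)

/-- In a cycle, each vertex on the support has two distinct neighbors along the cycle. -/
lemma cycle_two_incident_edges {D : Type} {G : SimpleGraph D} {v a : D}
    (c : G.Walk v v) (hc : c.IsCycle) (ha : a ∈ c.support) :
    ∃ x y : D, x ≠ y ∧ s(a, x) ∈ c.edges ∧ s(a, y) ∈ c.edges := by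
  classical
  have hwc : (c.rotate a ha).IsCycle := hc.rotate ha
  have hmem : ∀ e, e ∈ (c.rotate a ha).edges ↔ e ∈ c.edges := fun e =>
    (c.rotate_edges a ha).mem_iff
  generalize c.rotate a ha = w at hwc hmem
  cases w with
  | nil => exact absurd rfl hwc.ne_nil
  | cons h q =>
    rename_i x
    obtain ⟨y, q₂, h', heq⟩ := SimpleGraph.Walk.exists_cons_eq_concat h q
    refine ⟨x, y, ?_, (hmem _).mp (by simp), (hmem _).mp ?_⟩
    · -- x ≠ y
      intro hxy
      subst hxy
      have hnd : (SimpleGraph.Walk.cons h q).edges.Nodup :=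
        hwc.isCircuit.isTrail.edges_nodup
      have hE : (SimpleGraph.Walk.cons h q).edges = s(a, x) :: q.edges := by simp
      have hE2 : (SimpleGraph.Walk.cons h q).edges = q₂.edges ++ [s(a, x)] := by
        rw [heq, SimpleGraph.Walk.edges_concat, Sym2.eq_swap, List.concat_eq_append]
      have hlen : 3 ≤ (SimpleGraph.Walk.cons h q).edges.length := by
        rw [SimpleGraph.Walk.length_edges]
        exact hwc.three_le_length
      have hne : q₂.edges ≠ [] := by
        intro hnil
        rw [hE2, hnil] at hlen
        simp at hlen
      obtain ⟨cc, s, hcs⟩ := List.exists_cons_of_ne_nil hne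
      have h3 : q.edges = s ++ [s(a, x)] := by
        have := hE.symm.trans hE2
        rw [hcs] at this
        have := congrArg List.tail this
        simpa using this
      have hmemq : s(a, x) ∈ q.edges := by rw [h3]; simp
      rw [hE] at hnd
      exact (List.nodup_cons.mp hnd).1 hmemq
    · -- s(a, y) is the last edge
      rw [heq, SimpleGraph.Walk.edges_concat, Sym2.eq_swap]
      simp

/-- The undirected nearest-neighbor graph is a forest (acyclic). -/
theorem nn_graph_is_forest
    {D : Type} [Fintype D] (h2 : 2 ≤ Fintype.card D)
    (d : D → D → ℝ) (hdsymm : ∀ i j, d i j = d j i)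
    (hdistinct : ∀ i j k l : D, i ≠ j → k ≠ l → s(i, j) ≠ s(k, l) → d i j ≠ d k l)
    (n : D → D) (hn_ne : ∀ i, n i ≠ i)
    (hn_min : ∀ i k, k ≠ i → d i (n i) ≤ d i k) :
    (nnGraph n).IsAcyclic := by
  classical
  intro v c hc
  -- symmetric lift of d to unordered pairs
  let f : Sym2 D → ℝ := Sym2.lift ⟨d, fun i j => hdsymm i j⟩
  -- pick a maximal edge of the cycle
  have hene : c.edges.toFinset.Nonempty := by
    rw [List.toFinset_nonempty_iff]
    intro hnil
    have h3 := hc.three_le_length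
    rw [← SimpleGraph.Walk.length_edges, hnil] at h3
    simp at h3
  obtain ⟨e, hemem, hemax⟩ := c.edges.toFinset.exists_max_image f hene
  rw [List.mem_toFinset] at hemem
  have hemax' : ∀ e' ∈ c.edges, f e' ≤ f e := fun e' he' =>
    hemax e' (List.mem_toFinset.mpr he')
  -- the key argument, symmetric in the two endpoints
  have key : ∀ a b : D, s(a, b) = e → n a = b → False := by
    intro a b hab hnab
    have haG : (nnGraph n).Adj a b := ((nnGraph n).mem_edgeSet).mp (c.edges_subset_edgeSet (hab ▸ hemem))
    have hne' : a ≠ b := haG.ne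
    have hasupp : a ∈ c.support :=
      c.fst_mem_support_of_mem_edges (hab ▸ hemem)
    obtain ⟨x, y, hxy, hx, hy⟩ := cycle_two_incident_edges c hc hasupp
    -- one of x, y is different from b
    have hex : ∃ k, k ≠ b ∧ s(a, k) ∈ c.edges := by
      by_cases hxb : x = b
      · exact ⟨y, fun hyb => hxy (hyb ▸ hxb), hy⟩
      · exact ⟨x, hxb, hx⟩
    obtain ⟨k, hkb, hk⟩ := hex
    have hka : k ≠ a := (((nnGraph n).mem_edgeSet).mp (c.edges_subset_edgeSet hk)).ne.symm
    have h1 : d a b ≤ d a k := hnab ▸ hn_min a k hka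
    have h2 : d a k ≠ d a b :=
      hdistinct a k a b (Ne.symm hka) hne'
        (by simp [Sym2.eq, Sym2.rel_iff', hkb]; tauto)
    have h3 : d a k ≤ d a b := by
      have hle := hemax' _ hk
      rw [← hab] at hle
      simpa [f] using hle
    exact h2 (le_antisymm h3 h1)
  -- e = s(a,b) with n a = b or n b = a
  induction e using Sym2.inductionOn with
  | hf a b =>
    have haG : (nnGraph n).Adj a b := ((nnGraph n).mem_edgeSet).mp (c.edges_subset_edgeSet hemem)
    rw [nnGraph, SimpleGraph.fromRel_adj] at haG
    rcases haG.2 with h | h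
    · exact key a b rfl h
    · exact key b a (Sym2.eq_swap) h
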